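/- Let G_• be an inverse system of groups whose abelianization pro-group Ab(G_•) is m-divisible, and let W be a finite solvable group of exponent m. Then every morphism of pro-groups φ : G_• → W is trivial (i.e. represented by a trivial homomorphism at some stage). -/

import Mathlib

private theorem abel_exp {W : Type*} [Group W] (m : ℕ) (hexp : ∀ w : W, w ^ m = 1)
    (x : Abelianization W) : x ^ m = 1 := by
  induction x using Quotient.inductionOn with
  | h w =>
    have : Abelianization.of (w ^ m) = Abelianization.of (1 : W) := by rw [hexp]
    have h' : Abelianization.of w ^ m = 1 := by simpa [map_pow] using this
    exact h'

private theorem of_eq_one_iff {W : Type*} [Group W] (w : W) :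
    Abelianization.of w = 1 ↔ w ∈ commutator W := by
  rw [← Abelianization.mk_eq_of]
  exact QuotientGroup.eq_one_iff w

private theorem sub_derived {W : Type*} [Group W] (n : ℕ) :
    (derivedSeries (commutator W) n).map (commutator W).subtype ≤ derivedSeries W (n + 1) := by
  induction n with
  | zero =>
    simp only [derivedSeries_zero]
    rw [derivedSeries_succ, derivedSeries_zero]
    intro x hx
    obtain ⟨y, _, rfl⟩ := hx
    exact y.2
  | succ n ih =>
    rw [derivedSeries_succ, Subgroup.map_commutator, derivedSeries_succ]
    exact Subgroup.commutator_mono ih ih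

/-- If the abelianization pro-group of an inverse system of groups `(G_α)` is
`m`-divisible (for every `α` there is `β ≥ α` such that every element of the
image of `Ab(G_β)` in `Ab(G_α)` is an `m`-th power), and `W` is a finite
solvable group of exponent `m`, then every morphism of pro-groups `G_• → W` is
trivial, i.e. every representative homomorphism becomes trivial at some later
stage. -/
theorem stmt16 {A : Type*} [Preorder A] [IsDirected A (· ≤ ·)]
    (G : A → Type*) [∀ a, Group (G a)]
    (p : ∀ ⦃a b : A⦄, a ≤ b → (G b →* G a))
    (hp_id : ∀ a : A, p (le_refl a) = MonoidHom.id (G a))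
    (hp_comp : ∀ ⦃a b c : A⦄ (hab : a ≤ b) (hbc : b ≤ c),
      (p hab).comp (p hbc) = p (hab.trans hbc))
    (m : ℕ)
    (hdiv : ∀ a : A, ∃ (b : A) (hab : a ≤ b), ∀ h : G b,
      ∃ g : Abelianization (G a), g ^ m = Abelianization.of (p hab h))
    (W : Type*) [Group W] [Finite W] [Group.IsSolvable W]
    (hexp : ∀ w : W, w ^ m = 1) :
    ∀ (a : A) (φ : G a →* W), ∃ (b : A) (hab : a ≤ b), φ.comp (p hab) = 1 := by
  -- key: prove by induction on derived length, for all groups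
  suffices key : ∀ (n : ℕ) (W' : Type _) [Group W'] (_ : derivedSeries W' n = ⊥)
      (_ : ∀ w : W', w ^ m = 1) (a : A) (φ : G a →* W'),
      ∃ (b : A) (hab : a ≤ b), φ.comp (p hab) = 1 by
    obtain ⟨n, hn⟩ := Group.IsSolvable.solvable (G := W)
    exact key n W hn hexp
  intro n
  induction n with
  | zero =>
    intro W' _ hbot hexp' a φ
    refine ⟨a, le_refl a, ?_⟩
    have hsub : ∀ w : W', w = 1 := by
      intro w
      have : w ∈ derivedSeries W' 0 := by rw [derivedSeries_zero]; trivial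
      rw [hbot] at this
      exact this
    ext h
    simp [hsub]
  | succ n ih =>
    intro W' _ hbot hexp' a φ
    -- Step 1: kill the abelianization of W'
    obtain ⟨b, hab, hb⟩ := hdiv a
    have hcomm : ∀ h : G b, φ (p hab h) ∈ commutator W' := by
      intro h
      rw [← of_eq_one_iff]
      obtain ⟨g, hg⟩ := hb h
      have : (Abelianization.lift ((Abelianization.of).comp φ)) (Abelianization.of (p hab h))
          = Abelianization.of (φ (p hab h)) := Abelianization.lift_apply_of _ _
      rw [← this, ← hg, map_pow]
      exact abel_exp m hexp' _
    -- Step 2: corestrict to the commutator subgroup and apply IH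
    set ψ : G b →* commutator W' :=
      MonoidHom.codRestrict (φ.comp (p hab)) (commutator W') hcomm with hψ
    have hderiv : derivedSeries (commutator W') n = ⊥ := by
      have h1 : (derivedSeries (commutator W') n).map (commutator W').subtype ≤ ⊥ := by
        rw [← hbot]
        exact sub_derived n
      rw [le_bot_iff, Subgroup.map_eq_bot_iff_of_injective _ (commutator W').subtype_injective]
        at h1
      exact h1
    have hexp'' : ∀ w : commutator W', w ^ m = 1 := by
      intro w
      ext
      simpa using hexp' (w : W')
    obtain ⟨c, hbc, hc⟩ := ih (commutator W') hderiv hexp'' b ψ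
    refine ⟨c, hab.trans hbc, ?_⟩
    ext h
    have := congrArg (fun f => (commutator W').subtype.comp f) hc
    have h2 : φ.comp ((p hab).comp (p hbc)) = 1 := by
      have hcoe : (commutator W').subtype.comp ψ = φ.comp (p hab) := by
        ext x; rfl
      rw [← MonoidHom.comp_assoc, ← hcoe, MonoidHom.comp_assoc, hc]
      ext x; simp
    rw [hp_comp hab hbc] at h2
    rw [h2]
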